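/- Let H be a complex Hilbert space and let A₀, A₁, B₀, B₁ be bounded self-adjoint operators on H satisfying A_x² = 1 and B_y² = 1 for x, y ∈ {0,1}, and such that every A_x commutes with every B_y. Then the operator norm of the CHSH operator satisfies ‖A₀B₀ + A₀B₁ + A₁B₀ − A₁B₁‖ ≤ 2√2. Consequently, for every unit vector ψ ∈ H, the quantum CHSH value ⟨ψ, (A₀B₀ + A₀B₁ + A₁B₀ − A₁B₁)ψ⟩ is at most 2√2, i.e. the quantum winning probability of the CHSH game is at most (2 + √2)/4. -/

import Mathlib

/-- Tsirelson's bound: if `A₀, A₁, B₀, B₁` are bounded self-adjoint operators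
on a complex Hilbert space squaring to the identity, with every `A x`
commuting with every `B y`, then the CHSH operator has norm at most `2√2`; in
particular for every unit vector `ψ` the quantum CHSH value
`⟨ψ, (A₀B₀ + A₀B₁ + A₁B₀ − A₁B₁)ψ⟩` is at most `2√2`. -/
theorem tsirelson_bound {H : Type*} [NormedAddCommGroup H]
    [InnerProductSpace ℂ H] [CompleteSpace H]
    (A B : Fin 2 → H →L[ℂ] H)
    (hA : ∀ x, IsSelfAdjoint (A x)) (hB : ∀ y, IsSelfAdjoint (B y))
    (hA2 : ∀ x, A x * A x = 1) (hB2 : ∀ y, B y * B y = 1)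
    (hcomm : ∀ x y, Commute (A x) (B y)) :
    ‖A 0 * B 0 + A 0 * B 1 + A 1 * B 0 - A 1 * B 1‖ ≤ 2 * Real.sqrt 2 ∧
    ∀ ψ : H, ‖ψ‖ = 1 →
      (inner ℂ ψ ((A 0 * B 0 + A 0 * B 1 + A 1 * B 0 - A 1 * B 1) ψ) : ℂ).re
        ≤ 2 * Real.sqrt 2 := by
  set C := A 0 * B 0 + A 0 * B 1 + A 1 * B 0 - A 1 * B 1 with hC
  have swap : ∀ i j k l : Fin 2, A i * B j * (A k * B l) = A i * A k * (B j * B l) := by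
    intro i j k l
    calc A i * B j * (A k * B l) = A i * (B j * A k) * B l := by
          rw [mul_assoc, mul_assoc, mul_assoc]
      _ = A i * (A k * B j) * B l := by rw [(hcomm k j).eq]
      _ = A i * A k * (B j * B l) := by rw [mul_assoc, mul_assoc, mul_assoc]
  have key : C * C = 4 + (A 0 * A 1 - A 1 * A 0) * (B 1 * B 0 - B 0 * B 1) := by
    have h4 : (4 : H →L[ℂ] H) = 1 + 1 + 1 + 1 := by norm_num
    rw [hC, h4]
    simp only [add_mul, sub_mul, mul_add, mul_sub, swap, hA2, hB2, one_mul, mul_one]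
    abel
  have hone : ‖(1 : H →L[ℂ] H)‖ ≤ 1 := by
    rw [ContinuousLinearMap.one_def]; exact ContinuousLinearMap.norm_id_le
  have hnA : ∀ x, ‖A x‖ ≤ 1 := by
    intro x
    have h1 : ‖A x‖ * ‖A x‖ = ‖star (A x) * A x‖ := (CStarRing.norm_star_mul_self).symm
    rw [(hA x).star_eq, hA2 x] at h1
    nlinarith [norm_nonneg (A x)]
  have hnB : ∀ y, ‖B y‖ ≤ 1 := by
    intro y
    have h1 : ‖B y‖ * ‖B y‖ = ‖star (B y) * B y‖ := (CStarRing.norm_star_mul_self).symm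
    rw [(hB y).star_eq, hB2 y] at h1
    nlinarith [norm_nonneg (B y)]
  have hCC : ‖C * C‖ ≤ 8 := by
    rw [key]
    have h4 : ‖(4 : H →L[ℂ] H)‖ ≤ 4 := by
      have : (4 : H →L[ℂ] H) = 1 + 1 + 1 + 1 := by norm_num
      rw [this]
      calc ‖(1 : H →L[ℂ] H) + 1 + 1 + 1‖ ≤ ‖(1 : H →L[ℂ] H) + 1 + 1‖ + ‖(1 : H →L[ℂ] H)‖ :=
            norm_add_le _ _
        _ ≤ (‖(1 : H →L[ℂ] H) + 1‖ + ‖(1 : H →L[ℂ] H)‖) + ‖(1 : H →L[ℂ] H)‖ := by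
            gcongr; exact norm_add_le _ _
        _ ≤ ((‖(1 : H →L[ℂ] H)‖ + ‖(1 : H →L[ℂ] H)‖) + ‖(1 : H →L[ℂ] H)‖) + ‖(1 : H →L[ℂ] H)‖ := by
            gcongr; exact norm_add_le _ _
        _ ≤ 4 := by linarith
    have hAc : ‖A 0 * A 1 - A 1 * A 0‖ ≤ 2 := by
      calc ‖A 0 * A 1 - A 1 * A 0‖ ≤ ‖A 0 * A 1‖ + ‖A 1 * A 0‖ := norm_sub_le _ _
        _ ≤ ‖A 0‖ * ‖A 1‖ + ‖A 1‖ * ‖A 0‖ := by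
            gcongr <;> exact norm_mul_le _ _
        _ ≤ 1 * 1 + 1 * 1 := by
            gcongr <;> first | exact hnA 0 | exact hnA 1
        _ = 2 := by norm_num
    have hBc : ‖B 1 * B 0 - B 0 * B 1‖ ≤ 2 := by
      calc ‖B 1 * B 0 - B 0 * B 1‖ ≤ ‖B 1 * B 0‖ + ‖B 0 * B 1‖ := norm_sub_le _ _
        _ ≤ ‖B 1‖ * ‖B 0‖ + ‖B 0‖ * ‖B 1‖ := by
            gcongr <;> exact norm_mul_le _ _
        _ ≤ 1 * 1 + 1 * 1 := by
            gcongr <;> first | exact hnB 0 | exact hnB 1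
        _ = 2 := by norm_num
    calc ‖(4 : H →L[ℂ] H) + (A 0 * A 1 - A 1 * A 0) * (B 1 * B 0 - B 0 * B 1)‖
        ≤ ‖(4 : H →L[ℂ] H)‖ + ‖(A 0 * A 1 - A 1 * A 0) * (B 1 * B 0 - B 0 * B 1)‖ :=
          norm_add_le _ _
      _ ≤ 4 + ‖A 0 * A 1 - A 1 * A 0‖ * ‖B 1 * B 0 - B 0 * B 1‖ := by
          gcongr; exact norm_mul_le _ _
      _ ≤ 4 + 2 * 2 := by
          gcongr
      _ = 8 := by norm_num
  have hCsa : IsSelfAdjoint C := by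
    have h : ∀ i j : Fin 2, IsSelfAdjoint (A i * B j) := fun i j => by
      rw [IsSelfAdjoint, star_mul, (hA i).star_eq, (hB j).star_eq, (hcomm i j).eq]
    exact (((h 0 0).add (h 0 1)).add (h 1 0)).sub (h 1 1)
  have hCsq : ‖C‖ * ‖C‖ ≤ 8 := by
    have := CStarRing.norm_star_mul_self (x := C)
    rw [hCsa.star_eq] at this
    linarith [hCC]
  have hnorm : ‖C‖ ≤ 2 * Real.sqrt 2 := by
    have h8 : (2 * Real.sqrt 2) * (2 * Real.sqrt 2) = 8 := by
      have := Real.mul_self_sqrt (by norm_num : (2:ℝ) ≥ 0).le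
      nlinarith [Real.sq_sqrt (by norm_num : (0:ℝ) ≤ 2)]
    nlinarith [norm_nonneg C, Real.sqrt_nonneg 2]
  refine ⟨hnorm, fun ψ hψ => ?_⟩
  have h1 : (inner ℂ ψ (C ψ) : ℂ).re ≤ ‖(inner ℂ ψ (C ψ) : ℂ)‖ := Complex.re_le_norm _
  have h2 : ‖(inner ℂ ψ (C ψ) : ℂ)‖ ≤ ‖ψ‖ * ‖C ψ‖ := norm_inner_le_norm _ _
  have h3 : ‖C ψ‖ ≤ ‖C‖ * ‖ψ‖ := C.le_opNorm ψ
  rw [hψ] at h2 h3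
  simp at h2 h3
  linarith
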